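/- The domination relation on Feller convolution semigroups is antisymmetric: if ν¹ dominates ν² and ν² dominates ν¹, then ν¹ = ν². Key step: if ν¹ dominates ν² then, by Jensen's inequality applied to conditional expectations, for all f₁,…,fₙ ∈ C(M), x₁,…,xₙ ∈ M and t ≥ 0, E_{ν¹}[exp(Σᵢ K_{0,t}fᵢ(xᵢ))] ≥ E_{ν²}[exp(Σᵢ K_{0,t}fᵢ(xᵢ))]; mutual domination forces equality of these exponential moments and hence equality of the semigroups. -/

import Mathlib

open MeasureTheory Filter Topology
open scoped NNReal

lemma aux_int {M : Type*} [MetricSpace M] [CompactSpace M] [MeasurableSpace M] [BorelSpace M]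
    (f : C(M, ℝ)) (κ : Measure M) [IsFiniteMeasure κ] :
    Integrable (fun y => f y) κ :=
  Integrable.mono' (integrable_const ‖f‖) f.continuous.measurable.aestronglyMeasurable
    (ae_of_all _ fun y => f.norm_coe_le_norm y)

lemma aux_abs {M : Type*} [MetricSpace M] [CompactSpace M] [MeasurableSpace M] [BorelSpace M]
    (f : C(M, ℝ)) (κ : Measure M) [IsProbabilityMeasure κ] :
    |∫ y, f y ∂κ| ≤ ‖f‖ := by
  have := norm_integral_le_of_norm_le_const (μ := κ) (f := fun y => f y) (C := ‖f‖)
    (ae_of_all _ fun y => f.norm_coe_le_norm y)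
  simpa using this

lemma aux_pyth {Ω : Type*} [m0 : MeasurableSpace Ω]
    (μ : Measure Ω) [IsProbabilityMeasure μ] {m : MeasurableSpace Ω} (hm : m ≤ m0)
    {g : Ω → ℝ} (hg : Integrable g μ) {C : ℝ≥0} (hb : ∀ᵐ ω ∂μ, |g ω| ≤ C) :
    ∫ ω, ((μ[g|m]) ω) ^ 2 ∂μ + ∫ ω, (g ω - (μ[g|m]) ω) ^ 2 ∂μ = ∫ ω, g ω ^ 2 ∂μ := by
  set h : Ω → ℝ := μ[g|m] with hh
  have hhb : ∀ᵐ ω ∂μ, |h ω| ≤ C := ae_bdd_condExp_of_ae_bdd hb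
  have hhm : AEStronglyMeasurable[m0] h μ :=
    (stronglyMeasurable_condExp.mono hm).aestronglyMeasurable
  have hgm : AEStronglyMeasurable[m0] g μ := hg.aestronglyMeasurable
  have hmul : ∀ {a b : Ω → ℝ}, AEStronglyMeasurable[m0] a μ → AEStronglyMeasurable[m0] b μ →
      (∀ᵐ ω ∂μ, |a ω| ≤ C) → (∀ᵐ ω ∂μ, |b ω| ≤ C) → Integrable (fun ω => a ω * b ω) μ := by
    intro a b ha hb' hab hbb
    refine Integrable.mono' (integrable_const ((C : ℝ) * C)) (ha.mul hb') ?_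
    filter_upwards [hab, hbb] with ω h1 h2
    calc ‖a ω * b ω‖ = |a ω| * |b ω| := abs_mul _ _
      _ ≤ C * C := mul_le_mul h1 h2 (abs_nonneg _) C.coe_nonneg
  have hgg : Integrable (fun ω => g ω * g ω) μ := hmul hgm hgm hb hb
  have hgh : Integrable (fun ω => h ω * g ω) μ := hmul hhm hgm hhb hb
  have hhh : Integrable (fun ω => h ω * h ω) μ := hmul hhm hhm hhb hhb
  have hpull : μ[fun ω => h ω * g ω|m] =ᵐ[μ] fun ω => h ω * (μ[g|m]) ω := by
    have := condExp_mul_of_stronglyMeasurable_left (μ := μ) (f := h) (g := g)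
      stronglyMeasurable_condExp (by simpa [Pi.mul_def] using hgh) hg
    simpa [Pi.mul_def] using this
  have hcross : ∫ ω, h ω * g ω ∂μ = ∫ ω, h ω * h ω ∂μ := by
    rw [← integral_condExp hm (f := fun ω => h ω * g ω)]
    exact integral_congr_ae hpull
  have hexp : ∫ ω, (g ω - h ω) * (g ω - h ω) ∂μ
      = ∫ ω, g ω * g ω ∂μ - 2 * ∫ ω, h ω * g ω ∂μ + ∫ ω, h ω * h ω ∂μ := by
    have heq : (fun ω => (g ω - h ω) * (g ω - h ω))
        = fun ω => g ω * g ω - 2 * (h ω * g ω) + h ω * h ω := by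
      funext ω; ring
    rw [heq, integral_add (by exact (hgg.sub (hgh.const_mul 2))) hhh,
      integral_sub hgg (hgh.const_mul 2), integral_const_mul]
  simp only [pow_two]
  rw [hexp, hcross]
  ring

lemma aux_jensen {Ω : Type*} [m0 : MeasurableSpace Ω]
    (μ : Measure Ω) [IsProbabilityMeasure μ] {m : MeasurableSpace Ω} (hm : m ≤ m0)
    {g : Ω → ℝ} (hg : Integrable g μ) {C : ℝ≥0} (hb : ∀ᵐ ω ∂μ, |g ω| ≤ C) :
    ∫ ω, ((μ[g|m]) ω) ^ 2 ∂μ ≤ ∫ ω, g ω ^ 2 ∂μ := by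
  have hp := @aux_pyth Ω m0 μ _ m hm g hg C hb
  have hnn : 0 ≤ ∫ ω, (g ω - (μ[g|m]) ω) ^ 2 ∂μ := integral_nonneg fun ω => sq_nonneg _
  linarith

lemma aux_eq_of_sq {Ω : Type*} [m0 : MeasurableSpace Ω]
    (μ : Measure Ω) [IsProbabilityMeasure μ] {m : MeasurableSpace Ω} (hm : m ≤ m0)
    {g : Ω → ℝ} (hg : Integrable g μ) {C : ℝ≥0} (hb : ∀ᵐ ω ∂μ, |g ω| ≤ C)
    (heq : ∫ ω, ((μ[g|m]) ω) ^ 2 ∂μ = ∫ ω, g ω ^ 2 ∂μ) :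
    μ[g|m] =ᵐ[μ] g := by
  set h : Ω → ℝ := μ[g|m] with hh
  have hp := @aux_pyth Ω m0 μ _ m hm g hg C hb
  rw [← hh] at hp
  have hzero : ∫ ω, (g ω - h ω) ^ 2 ∂μ = 0 := by linarith
  have hhb : ∀ᵐ ω ∂μ, |h ω| ≤ C := ae_bdd_condExp_of_ae_bdd hb
  have hhm : AEStronglyMeasurable[m0] h μ :=
    (stronglyMeasurable_condExp.mono hm).aestronglyMeasurable
  have hint : Integrable (fun ω => (g ω - h ω) ^ 2) μ := by
    refine Integrable.mono' (integrable_const (((C : ℝ) + C) ^ 2))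
      ((hg.aestronglyMeasurable.sub hhm).pow 2) ?_
    filter_upwards [hb, hhb] with ω h1 h2
    have habs : |g ω - h ω| ≤ (C : ℝ) + C := (abs_sub _ _).trans (add_le_add h1 h2)
    calc ‖(g ω - h ω) ^ 2‖ = |g ω - h ω| ^ 2 := by
          rw [Real.norm_eq_abs, abs_pow, sq_abs, ← sq_abs]
      _ ≤ ((C : ℝ) + C) ^ 2 := pow_le_pow_left₀ (abs_nonneg _) habs 2
  have := (integral_eq_zero_iff_of_nonneg (fun ω => sq_nonneg _) hint).1 hzero
  filter_upwards [this] with ω hω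
  have : (g ω - h ω) ^ 2 = 0 := hω
  have := sq_eq_zero_iff.1 this
  linarith [this]

lemma aux_shift_int {M : Type*} [MetricSpace M] [CompactSpace M] [MeasurableSpace M] [BorelSpace M]
    (f : C(M, ℝ)) (c : ℝ) (κ : Measure M) [IsProbabilityMeasure κ] :
    ∫ y, (f + ContinuousMap.const M c) y ∂κ = (∫ y, f y ∂κ) + c := by
  have : (fun y => (f + ContinuousMap.const M c) y) = fun y => f y + c := rfl
  rw [this, integral_add (aux_int f κ) (integrable_const c)]
  simp

lemma aux_not_int {M : Type*} [MetricSpace M] [CompactSpace M] [MeasurableSpace M] [BorelSpace M]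
    {Ω Ω' : Type*} [MeasurableSpace Ω] [MeasurableSpace Ω']
    {P : Measure Ω} {P' : Measure Ω'} [IsProbabilityMeasure P] [IsProbabilityMeasure P']
    {K : M → Ω → Measure M} {K' : M → Ω' → Measure M}
    (hK : ∀ z ω, IsProbabilityMeasure (K z ω)) (hK' : ∀ z ω, IsProbabilityMeasure (K' z ω))
    {m : MeasurableSpace Ω}
    (hdom : ∀ (f : C(M, ℝ)) (z : M),
      ∫ ω, (P[fun ω' => ∫ y, f y ∂ K z ω' | m]) ω ∂P = ∫ ω, ∫ y, f y ∂ K' z ω ∂P')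
    (f : C(M, ℝ)) (z : M) (hni : ¬ Integrable (fun ω => ∫ y, f y ∂ K z ω) P) :
    ¬ Integrable (fun ω => ∫ y, f y ∂ K' z ω) P' := by
  intro hint
  set c : ℝ := ‖f‖ + 1 with hc
  have hshift : (fun ω => ∫ y, (f + ContinuousMap.const M c) y ∂ K z ω)
      = fun ω => (∫ y, f y ∂ K z ω) + c := by
    funext ω; haveI := hK z ω; exact aux_shift_int f c _
  have hshift' : (fun ω => ∫ y, (f + ContinuousMap.const M c) y ∂ K' z ω)
      = fun ω => (∫ y, f y ∂ K' z ω) + c := by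
    funext ω; haveI := hK' z ω; exact aux_shift_int f c _
  have h1 : ¬ Integrable (fun ω => ∫ y, (f + ContinuousMap.const M c) y ∂ K z ω) P := by
    rw [hshift]
    intro h
    have h2 := h.sub (integrable_const c)
    refine hni (h2.congr (ae_of_all _ fun ω => ?_))
    simp
  have h0 : P[fun ω' => ∫ y, (f + ContinuousMap.const M c) y ∂ K z ω' | m] = 0 :=
    condExp_of_not_integrable h1
  have hd := hdom (f + ContinuousMap.const M c) z
  rw [h0] at hd
  simp only [Pi.zero_apply, integral_zero] at hd
  have hRHS : ∫ ω, ∫ y, (f + ContinuousMap.const M c) y ∂ K' z ω ∂P'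
      = (∫ ω, ∫ y, f y ∂ K' z ω ∂P') + c := by
    rw [hshift', integral_add hint (integrable_const c)]
    simp
  have hge : -‖f‖ ≤ ∫ ω, ∫ y, f y ∂ K' z ω ∂P' := by
    have hmono := integral_mono (μ := P') (integrable_const (-‖f‖)) hint
      (fun ω => by haveI := hK' z ω; linarith [abs_le.1 (aux_abs f (K' z ω))])
    simpa using hmono
  rw [hRHS] at hd
  rw [hc] at hd
  linarith

/-- Antisymmetry of the domination relation on (laws of) stochastic flows of kernels: if
the flow `K₂` has the law of a flow obtained by filtering `K₁` with respect to a subnoise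
(i.e. its finite-dimensional moments are those of the conditional expectations of `K₁`
given sub-σ-fields `𝒢₁ t`), and symmetrically `K₁` has the law of a filtering of `K₂`,
then the two flows have the same law, i.e. the same finite-dimensional moments (which
determine the convolution semigroups `ν¹ = ν²`). -/
theorem stmt10 {M : Type*} [MetricSpace M] [CompactSpace M]
    [MeasurableSpace M] [BorelSpace M]
    {Ω₁ Ω₂ : Type*} [MeasurableSpace Ω₁] [MeasurableSpace Ω₂]
    (P₁ : Measure Ω₁) (P₂ : Measure Ω₂)
    [IsProbabilityMeasure P₁] [IsProbabilityMeasure P₂]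
    (K₁ : ℝ≥0 → M → Ω₁ → Measure M) (K₂ : ℝ≥0 → M → Ω₂ → Measure M)
    (h₁ : ∀ t x ω, IsProbabilityMeasure (K₁ t x ω))
    (h₂ : ∀ t x ω, IsProbabilityMeasure (K₂ t x ω))
    (𝒢₁ : ℝ≥0 → MeasurableSpace Ω₁) (𝒢₂ : ℝ≥0 → MeasurableSpace Ω₂)
    (h𝒢₁ : ∀ t, 𝒢₁ t ≤ ‹MeasurableSpace Ω₁›)
    (h𝒢₂ : ∀ t, 𝒢₂ t ≤ ‹MeasurableSpace Ω₂›)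
    (hdom12 : ∀ (n : ℕ) (t : ℝ≥0) (f : Fin n → C(M, ℝ)) (x : Fin n → M),
      ∫ ω, ∏ i, (P₁[fun ω' => ∫ y, f i y ∂ K₁ t (x i) ω' | 𝒢₁ t]) ω ∂P₁
        = ∫ ω, ∏ i, ∫ y, f i y ∂ K₂ t (x i) ω ∂P₂)
    (hdom21 : ∀ (n : ℕ) (t : ℝ≥0) (f : Fin n → C(M, ℝ)) (x : Fin n → M),
      ∫ ω, ∏ i, (P₂[fun ω' => ∫ y, f i y ∂ K₂ t (x i) ω' | 𝒢₂ t]) ω ∂P₂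
        = ∫ ω, ∏ i, ∫ y, f i y ∂ K₁ t (x i) ω ∂P₁) :
    ∀ (n : ℕ) (t : ℝ≥0) (f : Fin n → C(M, ℝ)) (x : Fin n → M),
      ∫ ω, ∏ i, ∫ y, f i y ∂ K₁ t (x i) ω ∂P₁
        = ∫ ω, ∏ i, ∫ y, f i y ∂ K₂ t (x i) ω ∂P₂ := by
  intro n t f x
  -- one-point versions of the domination hypotheses
  have hdomA : ∀ (f₀ : C(M, ℝ)) (z : M),
      ∫ ω, (P₁[fun ω' => ∫ y, f₀ y ∂ K₁ t z ω' | 𝒢₁ t]) ω ∂P₁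
        = ∫ ω, ∫ y, f₀ y ∂ K₂ t z ω ∂P₂ := by
    intro f₀ z
    simpa using hdom12 1 t (fun _ => f₀) (fun _ => z)
  have hdomB : ∀ (f₀ : C(M, ℝ)) (z : M),
      ∫ ω, (P₂[fun ω' => ∫ y, f₀ y ∂ K₂ t z ω' | 𝒢₂ t]) ω ∂P₂
        = ∫ ω, ∫ y, f₀ y ∂ K₁ t z ω ∂P₁ := by
    intro f₀ z
    simpa using hdom21 1 t (fun _ => f₀) (fun _ => z)
  -- pointwise bounds
  have hb₁ : ∀ i : Fin n, ∀ᵐ ω ∂P₁,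
      |∫ y, f i y ∂ K₁ t (x i) ω| ≤ (‖f i‖₊ : ℝ≥0) := by
    intro i
    refine ae_of_all _ fun ω => ?_
    haveI := h₁ t (x i) ω
    simpa [coe_nnnorm] using aux_abs (f i) (K₁ t (x i) ω)
  have hb₂ : ∀ i : Fin n, ∀ᵐ ω ∂P₂,
      |∫ y, f i y ∂ K₂ t (x i) ω| ≤ (‖f i‖₊ : ℝ≥0) := by
    intro i
    refine ae_of_all _ fun ω => ?_
    haveI := h₂ t (x i) ω
    simpa [coe_nnnorm] using aux_abs (f i) (K₂ t (x i) ω)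
  by_cases hall : ∀ i : Fin n, Integrable (fun ω => ∫ y, f i y ∂ K₁ t (x i) ω) P₁
  · -- all moments integrable: Jensen chain forces condexp = identity a.e.
    have hall2 : ∀ i : Fin n, Integrable (fun ω => ∫ y, f i y ∂ K₂ t (x i) ω) P₂ := by
      intro i
      by_contra hni
      exact aux_not_int (fun z ω => h₂ t z ω) (fun z ω => h₁ t z ω) hdomB (f i) (x i) hni
        (hall i)
    have hae : ∀ i : Fin n,
        (P₁[fun ω' => ∫ y, f i y ∂ K₁ t (x i) ω' | 𝒢₁ t]) =ᵐ[P₁]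
          fun ω => ∫ y, f i y ∂ K₁ t (x i) ω := by
      intro i
      have hsq12 := hdom12 2 t (fun _ => f i) (fun _ => x i)
      have hsq21 := hdom21 2 t (fun _ => f i) (fun _ => x i)
      simp only [Fin.prod_univ_two, ← pow_two] at hsq12 hsq21
      have hJ1 := aux_jensen P₁ (h𝒢₁ t) (hall i) (hb₁ i)
      have hJ2 := aux_jensen P₂ (h𝒢₂ t) (hall2 i) (hb₂ i)
      refine aux_eq_of_sq P₁ (h𝒢₁ t) (hall i) (hb₁ i) ?_
      linarith
    have hprod : (fun ω => ∏ i, (P₁[fun ω' => ∫ y, f i y ∂ K₁ t (x i) ω' | 𝒢₁ t]) ω)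
        =ᵐ[P₁] fun ω => ∏ i, ∫ y, f i y ∂ K₁ t (x i) ω := by
      have hA : ∀ᵐ ω ∂P₁, ∀ i : Fin n,
          (P₁[fun ω' => ∫ y, f i y ∂ K₁ t (x i) ω' | 𝒢₁ t]) ω
            = ∫ y, f i y ∂ K₁ t (x i) ω := ae_all_iff.2 hae
      filter_upwards [hA] with ω hω
      exact Finset.prod_congr rfl fun i _ => hω i
    calc ∫ ω, ∏ i, ∫ y, f i y ∂ K₁ t (x i) ω ∂P₁
        = ∫ ω, ∏ i, (P₁[fun ω' => ∫ y, f i y ∂ K₁ t (x i) ω' | 𝒢₁ t]) ω ∂P₁ :=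
          (integral_congr_ae hprod).symm
      _ = ∫ ω, ∏ i, ∫ y, f i y ∂ K₂ t (x i) ω ∂P₂ := hdom12 n t f x
  · -- some moment non-integrable: both sides vanish
    push_neg at hall
    obtain ⟨i₀, hni⟩ := hall
    have hni2 : ¬ Integrable (fun ω => ∫ y, f i₀ y ∂ K₂ t (x i₀) ω) P₂ :=
      aux_not_int (fun z ω => h₁ t z ω) (fun z ω => h₂ t z ω) hdomA (f i₀) (x i₀) hni
    have h01 : P₁[fun ω' => ∫ y, f i₀ y ∂ K₁ t (x i₀) ω' | 𝒢₁ t] = 0 := condExp_of_not_integrable hni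
    have h02 : P₂[fun ω' => ∫ y, f i₀ y ∂ K₂ t (x i₀) ω' | 𝒢₂ t] = 0 := condExp_of_not_integrable hni2
    have hz2 : ∫ ω, ∏ i, ∫ y, f i y ∂ K₂ t (x i) ω ∂P₂ = 0 := by
      rw [← hdom12 n t f x]
      have hzero : ∀ ω : Ω₁,
          ∏ i, (P₁[fun ω' => ∫ y, f i y ∂ K₁ t (x i) ω' | 𝒢₁ t]) ω = 0 := fun ω =>
        Finset.prod_eq_zero (Finset.mem_univ i₀) (by rw [h01]; rfl)
      simp [hzero]
    have hz1 : ∫ ω, ∏ i, ∫ y, f i y ∂ K₁ t (x i) ω ∂P₁ = 0 := by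
      rw [← hdom21 n t f x]
      have hzero : ∀ ω : Ω₂,
          ∏ i, (P₂[fun ω' => ∫ y, f i y ∂ K₂ t (x i) ω' | 𝒢₂ t]) ω = 0 := fun ω =>
        Finset.prod_eq_zero (Finset.mem_univ i₀) (by rw [h02]; rfl)
      simp [hzero]
    rw [hz1, hz2]
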